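/- Let f be a polynomial with complex coefficients of degree N ≥ 1. There exists R > 0 such that for every r > R there exist N distinct points 0 ≤ t₁ < t₂ < ... < t_N < 2π, each an upcrossing of f_r with Re f_r(t_j) > 0, and N distinct points 0 ≤ t'₁ < t'₂ < ... < t'_N < 2π, each a downcrossing of f_r with Re f_r(t'_j) < 0. -/

import Mathlib

/-- `t` is an upcrossing of the curve `θ ↦ f(r·exp(iθ))`. -/
def IsUpcrossing (f : Polynomial ℂ) (r t : ℝ) : Prop :=
  (f.eval ((r : ℂ) * Complex.exp (Complex.I * t))).im = 0 ∧
  ∃ δ > (0 : ℝ),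
    (∀ s ∈ Set.Icc (t - δ) t, (f.eval ((r : ℂ) * Complex.exp (Complex.I * s))).im ≤ 0) ∧
    (∀ s ∈ Set.Icc t (t + δ), (f.eval ((r : ℂ) * Complex.exp (Complex.I * s))).im ≥ 0)

/-- `t` is a downcrossing of the curve `θ ↦ f(r·exp(iθ))`. -/
def IsDowncrossing (f : Polynomial ℂ) (r t : ℝ) : Prop :=
  (f.eval ((r : ℂ) * Complex.exp (Complex.I * t))).im = 0 ∧
  ∃ δ > (0 : ℝ),
    (∀ s ∈ Set.Icc (t - δ) t, (f.eval ((r : ℂ) * Complex.exp (Complex.I * s))).im ≥ 0) ∧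
    (∀ s ∈ Set.Icc t (t + δ), (f.eval ((r : ℂ) * Complex.exp (Complex.I * s))).im ≤ 0)

open Real

private lemma curve_analytic (f : Polynomial ℂ) (r : ℝ) (x : ℝ) :
    AnalyticAt ℝ (fun t : ℝ => (f.eval ((r : ℂ) * Complex.exp (Complex.I * t))).im) x := by
  have h0 : AnalyticAt ℝ (fun t : ℝ => ((t : ℂ))) x := Complex.ofRealCLM.analyticAt x
  have h1 : AnalyticAt ℝ (fun t : ℝ => Complex.exp (Complex.I * t)) x := by
    have := AnalyticAt.comp (𝕜 := ℝ) (f := fun t : ℝ => Complex.I * (t:ℂ))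
      (g := Complex.exp) (x := x)
      (AnalyticAt.restrictScalars (𝕜 := ℝ) analyticAt_cexp) (analyticAt_const.mul h0)
    exact this
  have h2 : AnalyticAt ℝ (fun t : ℝ => (r : ℂ) * Complex.exp (Complex.I * t)) x :=
    analyticAt_const.mul h1
  have h4 : AnalyticAt ℝ (fun t : ℝ => f.eval ((r : ℂ) * Complex.exp (Complex.I * t))) x := by
    have h3 := (h2.aeval_polynomial f)
    simpa [Polynomial.coe_aeval_eq_eval] using h3
  have h5 := AnalyticAt.comp (𝕜 := ℝ)
      (f := fun t : ℝ => f.eval ((r : ℂ) * Complex.exp (Complex.I * t)))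
      (g := fun z : ℂ => z.im) (Complex.imCLM.analyticAt _) h4
  exact h5

private lemma crossing_lemma (g : ℝ → ℝ) (hg : ∀ x, AnalyticAt ℝ g x)
    (a b : ℝ) (hab : a < b) (ha : g a < 0) (hb : 0 < g b) :
    ∃ t ∈ Set.Ioo a b, g t = 0 ∧ ∃ δ > (0:ℝ),
      (∀ s ∈ Set.Icc (t - δ) t, g s ≤ 0) ∧ (∀ s ∈ Set.Icc t (t + δ), g s ≥ 0) := by
  have hcont : Continuous g := continuous_iff_continuousAt.mpr fun x => (hg x).continuousAt
  set S : Set ℝ := {s | s ∈ Set.Icc a b ∧ 0 < g s} with hS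
  have hbS : b ∈ S := ⟨⟨le_of_lt hab, le_refl b⟩, hb⟩
  have hSne : S.Nonempty := ⟨b, hbS⟩
  have hbdd : BddBelow S := ⟨a, fun s hs => hs.1.1⟩
  set t : ℝ := sInf S with htdef
  have htle : ∀ s ∈ S, t ≤ s := fun s hs => csInf_le hbdd hs
  have htb : t ≤ b := htle b hbS
  have hta : a ≤ t := le_csInf hSne fun s hs => hs.1.1
  have hexistS : ∀ ε > (0:ℝ), ∃ s ∈ S, s < t + ε := by
    intro ε hε
    exact exists_lt_of_csInf_lt hSne (by linarith)
  -- a < t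
  have hat : a < t := by
    obtain ⟨ε, hε, hball⟩ := Metric.continuousAt_iff.mp (hcont.continuousAt (x := a)) (-g a)
      (by linarith)
    have hlow : ∀ s ∈ S, a + ε ≤ s := by
      intro s hs
      by_contra h
      push_neg at h
      have hd : dist s a < ε := by
        rw [Real.dist_eq, abs_lt]
        exact ⟨by linarith [hs.1.1], by linarith⟩
      have := hball hd
      rw [Real.dist_eq, abs_lt] at this
      linarith [hs.2]
    linarith [le_csInf hSne hlow]
  -- g t = 0
  have hgt0 : g t = 0 := by
    rcases lt_trichotomy (g t) 0 with h | h | h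
    · obtain ⟨ε, hε, hball⟩ := Metric.continuousAt_iff.mp (hcont.continuousAt (x := t)) (-g t)
        (by linarith)
      obtain ⟨s, hsS, hslt⟩ := hexistS ε hε
      have hd : dist s t < ε := by
        rw [Real.dist_eq, abs_lt]
        exact ⟨by linarith [htle s hsS], by linarith⟩
      have := hball hd
      rw [Real.dist_eq, abs_lt] at this
      linarith [hsS.2]
    · exact h
    · exfalso
      obtain ⟨ε, hε, hball⟩ := Metric.continuousAt_iff.mp (hcont.continuousAt (x := t)) (g t)
        (by linarith)
      set ε' := min (ε / 2) ((t - a) / 2) with hε'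
      have hε'pos : 0 < ε' := lt_min (by linarith) (by linarith)
      have hs' : t - ε' ∈ S := by
        have h1 : ε' ≤ (t - a) / 2 := min_le_right _ _
        have h2 : ε' ≤ ε / 2 := min_le_left _ _
        refine ⟨⟨by linarith, by linarith⟩, ?_⟩
        have hd : dist (t - ε') t < ε := by
          rw [Real.dist_eq, abs_lt]
          exact ⟨by linarith, by linarith⟩
        have := hball hd
        rw [Real.dist_eq, abs_lt] at this
        linarith
      have := htle _ hs'
      linarith
  -- g ≤ 0 on [a, t]
  have hleft : ∀ s ∈ Set.Icc a t, g s ≤ 0 := by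
    intro s hs
    rcases eq_or_lt_of_le hs.2 with h | h
    · rw [h, hgt0]
    · by_contra hpos
      push_neg at hpos
      have : s ∈ S := ⟨⟨hs.1, le_trans (le_of_lt h) htb⟩, hpos⟩
      linarith [htle s this]
  -- right side positivity via isolated zeros
  rcases (hg t).eventually_eq_zero_or_eventually_ne_zero with hzero | hne
  · exfalso
    obtain ⟨ε, hε, hball⟩ := Metric.eventually_nhds_iff.mp hzero
    obtain ⟨s, hsS, hslt⟩ := hexistS ε hε
    have : g s = 0 := hball (by
      rw [Real.dist_eq, abs_lt]
      exact ⟨by linarith [htle s hsS], by linarith⟩)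
    linarith [hsS.2]
  · have hne' : ∀ᶠ s in nhds t, s ≠ t → g s ≠ 0 := by
      rwa [eventually_nhdsWithin_iff] at hne
    obtain ⟨ε, hε, hball⟩ := Metric.eventually_nhds_iff.mp hne'
    obtain ⟨s₀, hs₀S, hs₀lt⟩ := hexistS ε hε
    have hts₀ : t < s₀ := by
      rcases eq_or_lt_of_le (htle s₀ hs₀S) with h | h
      · exfalso; rw [← h] at hs₀S; linarith [hs₀S.2]
      · exact h
    set δ := s₀ - t with hδ
    have hδpos : 0 < δ := by linarith
    have hδε : δ < ε := by linarith
    have hright : ∀ s, t < s → s ≤ t + δ → 0 < g s := by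
      intro s hts hstδ
      by_contra hneg
      push_neg at hneg
      rcases eq_or_lt_of_le hneg with h | h
      · exact hball (by
          rw [Real.dist_eq, abs_lt]
          exact ⟨by linarith, by linarith⟩)
          (by intro h'; rw [h'] at hts; exact lt_irrefl t hts) h
      · -- g s < 0 < g s₀, IVT gives a zero in (t, t+δ]
        have hss₀ : s ≠ s₀ := by intro h'; rw [h'] at h; linarith [hs₀S.2]
        rcases lt_or_gt_of_ne hss₀ with hlt | hgt
        · obtain ⟨c, hc, hgc⟩ := intermediate_value_Icc (le_of_lt hlt)
            (hcont.continuousOn) ⟨le_of_lt h, le_of_lt hs₀S.2⟩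
          have hct : c ≠ t := by intro h'; rw [h'] at hc; linarith [hc.1]
          exact hball (by
            rw [Real.dist_eq, abs_lt]
            exact ⟨by linarith [hc.1], by linarith [hc.2]⟩) hct hgc
        · obtain ⟨c, hc, hgc⟩ := intermediate_value_Icc' (le_of_lt hgt)
            (hcont.continuousOn) ⟨le_of_lt h, le_of_lt hs₀S.2⟩
          have hct : c ≠ t := by intro h'; rw [h'] at hc; linarith [hc.1]
          exact hball (by
            rw [Real.dist_eq, abs_lt]
            exact ⟨by linarith [hc.1], by linarith [hc.2, hstδ]⟩) hct hgc
    have htb' : t < b := by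
      rcases eq_or_lt_of_le htb with h | h
      · exfalso; rw [h] at hgt0; linarith
      · exact h
    refine ⟨t, ⟨hat, htb'⟩, hgt0, min δ (t - a), lt_min hδpos (by linarith), ?_, ?_⟩
    · intro s hs
      exact hleft s ⟨by linarith [hs.1, min_le_right δ (t - a)], hs.2⟩
    · intro s hs
      rcases eq_or_lt_of_le hs.1 with h | h
      · rw [← h, hgt0]
      · exact le_of_lt (hright s h (by linarith [hs.2, min_le_left δ (t - a)]))

private lemma eval_norm_le (p : Polynomial ℂ) (M : ℕ) (hp : p.natDegree ≤ M) (z : ℂ)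
    (hz : 1 ≤ ‖z‖) :
    ‖p.eval z‖ ≤ (∑ k ∈ Finset.range (M + 1), ‖p.coeff k‖) * ‖z‖ ^ M := by
  rw [Polynomial.eval_eq_sum_range' (Nat.lt_succ_of_le hp)]
  refine le_trans (norm_sum_le _ _) ?_
  rw [Finset.sum_mul]
  refine Finset.sum_le_sum fun k hk => ?_
  rw [norm_mul, norm_pow]
  exact mul_le_mul_of_nonneg_left
    (pow_le_pow_right₀ (by linarith) (Nat.lt_succ_iff.mp (Finset.mem_range.mp hk)))
    (norm_nonneg _)

private lemma cos_half_bound (x : ℝ) (m : ℕ) (h : |x - m * (2 * π)| ≤ π / 6) :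
    1 / 2 ≤ Real.cos x := by
  have hper : Real.cos x = Real.cos (x - m * (2 * π)) :=
    (Real.cos_periodic.sub_nat_mul_eq m).symm
  rw [hper]
  set y := x - m * (2 * π)
  have h1 : 1 - y ^ 2 / 2 ≤ Real.cos y := Real.one_sub_sq_div_two_le_cos
  have h2 : y ^ 2 ≤ (π / 6) ^ 2 := sq_le_sq' (by linarith [abs_le.mp h]) (by linarith [abs_le.mp h])
  nlinarith [Real.pi_lt_d2, Real.pi_gt_three]

private lemma cos_neg_half_bound (x : ℝ) (m : ℕ) (h : |x - (π + m * (2 * π))| ≤ π / 6) :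
    Real.cos x ≤ -(1 / 2) := by
  have : Real.cos x = -Real.cos (x - π) := by
    rw [← Real.cos_add_pi (x - π)]; ring_nf
  rw [this]
  have := cos_half_bound (x - π) m (by rw [show x - π - m * (2*π) = x - (π + m*(2*π)) by ring]; exact h)
  linarith

private lemma sin_shift (y : ℝ) (m : ℕ) : Real.sin (y + m * (2 * π)) = Real.sin y := by
  simpa using (Real.sin_periodic.add_nat_mul_eq m (x := y))

private lemma leading_term_eq (c : ℂ) (r t : ℝ) (N : ℕ) :
    c * ((r : ℂ) * Complex.exp (Complex.I * t)) ^ N =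
      ((‖c‖ * r ^ N : ℝ) : ℂ) *
        Complex.exp (((N * t + Complex.arg c : ℝ) : ℂ) * Complex.I) := by
  rw [mul_pow]
  have h1 : Complex.exp (Complex.I * t) ^ N = Complex.exp (((N * t : ℝ) : ℂ) * Complex.I) := by
    rw [← Complex.exp_nat_mul]; congr 1; push_cast; ring
  rw [h1]
  conv_lhs => rw [← Complex.norm_mul_exp_arg_mul_I c]
  rw [show (((N * t + Complex.arg c : ℝ)) : ℂ) * Complex.I =
    ((Complex.arg c : ℂ)) * Complex.I + ((N * t : ℝ) : ℂ) * Complex.I by push_cast; ring,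
    Complex.exp_add]
  push_cast
  ring

private lemma polar_re (ρ y : ℝ) : (((ρ : ℝ) : ℂ) * Complex.exp ((y : ℂ) * Complex.I)).re
    = ρ * Real.cos y := by
  simp [Complex.mul_re, Complex.exp_ofReal_mul_I_re, Complex.exp_ofReal_mul_I_im]

private lemma polar_im (ρ y : ℝ) : (((ρ : ℝ) : ℂ) * Complex.exp ((y : ℂ) * Complex.I)).im
    = ρ * Real.sin y := by
  simp [Complex.mul_im, Complex.exp_ofReal_mul_I_re, Complex.exp_ofReal_mul_I_im]

private lemma exists_strictMono_of_inj {N : ℕ} (P : ℝ → Prop) (u : Fin N → ℝ)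
    (hu : Function.Injective u) (hP : ∀ j, P (u j)) :
    ∃ t : Fin N → ℝ, StrictMono t ∧ ∀ j, P (t j) := by
  have hcard : (Finset.image u Finset.univ).card = N := by
    rw [Finset.card_image_of_injective _ hu, Finset.card_univ, Fintype.card_fin]
  refine ⟨fun j => ((Finset.image u Finset.univ).orderIsoOfFin hcard j : ℝ), ?_, ?_⟩
  · intro i j hij
    exact_mod_cast ((Finset.image u Finset.univ).orderIsoOfFin hcard).strictMono hij
  · intro j
    have hmem := ((Finset.image u Finset.univ).orderIsoOfFin hcard j).2
    rw [Finset.mem_image] at hmem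
    obtain ⟨i, _, hi⟩ := hmem
    have := hP i
    rwa [hi] at this
private lemma build_family {N : ℕ} (hN : 1 ≤ N) (P : ℝ → Prop)
    (hper : ∀ t, 2 * π ≤ t → P t → P (t - 2 * π))
    (θ : ℝ) (s : Fin N → ℝ)
    (hsP : ∀ j, P (s j))
    (hscen : ∀ j : Fin N, |s j - (θ + 2 * π / N * j)| ≤ π / (6 * N))
    (hθ1 : π / (6 * N) < θ)
    (hθ2 : θ + 2 * π / N * ((N : ℝ) - 1) + π / (6 * N) < 4 * π) :
    ∃ t : Fin N → ℝ, StrictMono t ∧ ∀ j, t j ∈ Set.Ico 0 (2 * π) ∧ P (t j) := by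
  have hNpos : (0 : ℝ) < N := by exact_mod_cast hN
  have hπ := Real.pi_pos
  have hNne : (N : ℝ) ≠ 0 := ne_of_gt hNpos
  set D : ℝ := 2 * π / N with hD
  set η : ℝ := π / (6 * N) with hη
  have hDpos : 0 < D := by positivity
  have hηpos : 0 < η := by positivity
  have hgap : D - 2 * η = 5 * π / (3 * N) := by rw [hD, hη]; field_simp; ring
  have hgappos : 0 < 5 * π / (3 * N) := by positivity
  have htot : D * ((N : ℝ) - 1) + 2 * η = 2 * π - 5 * π / (3 * N) := by
    rw [hD, hη]; field_simp; ring
  have hjbound : ∀ j : Fin N, (j : ℝ) ≤ (N : ℝ) - 1 := by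
    intro j
    have : (j : ℕ) + 1 ≤ N := j.isLt
    have := (Nat.cast_le (α := ℝ)).mpr this
    push_cast at this
    linarith
  have hslow : ∀ j : Fin N, 0 < s j := by
    intro j
    have h := (abs_le.mp (hscen j)).1
    have hj0 : (0 : ℝ) ≤ (j : ℝ) := Nat.cast_nonneg _
    nlinarith
  have hshigh : ∀ j : Fin N, s j < 4 * π := by
    intro j
    have h := (abs_le.mp (hscen j)).2
    have := hjbound j
    nlinarith
  set u : Fin N → ℝ := fun j => if s j < 2 * π then s j else s j - 2 * π with hu
  have huIco : ∀ j, u j ∈ Set.Ico 0 (2 * π) := by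
    intro j
    simp only [hu]
    split_ifs with h
    · exact ⟨le_of_lt (hslow j), h⟩
    · push_neg at h
      exact ⟨by linarith, by linarith [hshigh j]⟩
  have huP : ∀ j, P (u j) := by
    intro j
    simp only [hu]
    split_ifs with h
    · exact hsP j
    · push_neg at h
      exact hper _ h (hsP j)
  have hdiff : ∀ j k : Fin N, j < k → 0 < s k - s j ∧ s k - s j < 2 * π := by
    intro j k hjk
    have h1 := (abs_le.mp (hscen j)).1
    have h2 := (abs_le.mp (hscen j)).2
    have h3 := (abs_le.mp (hscen k)).1
    have h4 := (abs_le.mp (hscen k)).2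
    have hjk1 : (j : ℝ) + 1 ≤ (k : ℝ) := by
      have : (j : ℕ) + 1 ≤ (k : ℕ) := hjk
      exact_mod_cast this
    have hkN : (k : ℝ) ≤ (N : ℝ) - 1 := hjbound k
    have hj0 : (0 : ℝ) ≤ (j : ℝ) := Nat.cast_nonneg _
    have hmul1 : D * 1 ≤ D * ((k : ℝ) - j) := by
      apply mul_le_mul_of_nonneg_left (by linarith) (le_of_lt hDpos)
    have hmul2 : D * ((k : ℝ) - j) ≤ D * ((N : ℝ) - 1) := by
      apply mul_le_mul_of_nonneg_left (by linarith) (le_of_lt hDpos)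
    constructor
    · nlinarith
    · nlinarith
  have huinj : Function.Injective u := by
    intro j k hjk'
    by_contra hne
    rcases lt_or_gt_of_ne hne with h | h
    · obtain ⟨hd1, hd2⟩ := hdiff j k h
      simp only [hu] at hjk'
      by_cases c1 : s j < 2 * π <;> by_cases c2 : s k < 2 * π <;>
        simp [c1, c2] at hjk' <;> linarith [hslow j, hslow k, hshigh j, hshigh k]
    · obtain ⟨hd1, hd2⟩ := hdiff k j h
      simp only [hu] at hjk'
      by_cases c1 : s j < 2 * π <;> by_cases c2 : s k < 2 * π <;>
        simp [c1, c2] at hjk' <;> linarith [hslow j, hslow k, hshigh j, hshigh k]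
  exact exists_strictMono_of_inj (fun t => t ∈ Set.Ico 0 (2 * π) ∧ P t) u huinj
    (fun j => ⟨huIco j, huP j⟩)

private lemma curve_periodic (f : Polynomial ℂ) (r : ℝ) (t : ℝ) :
    f.eval ((r : ℂ) * Complex.exp (Complex.I * ((t + 2 * π : ℝ) : ℂ))) =
      f.eval ((r : ℂ) * Complex.exp (Complex.I * (t : ℂ))) := by
  congr 2
  push_cast
  rw [mul_add, Complex.exp_add, mul_comm Complex.I (2 * (π : ℂ)), Complex.exp_two_pi_mul_I,
    mul_one]

private lemma curve_sub (f : Polynomial ℂ) (r : ℝ) (t : ℝ) :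
    f.eval ((r : ℂ) * Complex.exp (Complex.I * ((t - 2 * π : ℝ) : ℂ))) =
      f.eval ((r : ℂ) * Complex.exp (Complex.I * (t : ℂ))) := by
  have := curve_periodic f r (t - 2 * π)
  rw [show t - 2 * π + 2 * π = t by ring] at this
  rw [← this]

private lemma IsUpcrossing.sub_two_pi {f : Polynomial ℂ} {r t : ℝ}
    (h : IsUpcrossing f r t) : IsUpcrossing f r (t - 2 * π) := by
  obtain ⟨h0, δ, hδ, hl, hr⟩ := h
  refine ⟨by rw [curve_sub]; exact h0, δ, hδ, ?_, ?_⟩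
  · intro s hs
    have h1 := hl (s + 2 * π) ⟨by linarith [hs.1], by linarith [hs.2]⟩
    rwa [curve_periodic f r s] at h1
  · intro s hs
    have h1 := hr (s + 2 * π) ⟨by linarith [hs.1], by linarith [hs.2]⟩
    rwa [curve_periodic f r s] at h1

private lemma IsDowncrossing.sub_two_pi {f : Polynomial ℂ} {r t : ℝ}
    (h : IsDowncrossing f r t) : IsDowncrossing f r (t - 2 * π) := by
  obtain ⟨h0, δ, hδ, hl, hr⟩ := h
  refine ⟨by rw [curve_sub]; exact h0, δ, hδ, ?_, ?_⟩
  · intro s hs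
    have h1 := hl (s + 2 * π) ⟨by linarith [hs.1], by linarith [hs.2]⟩
    rwa [curve_periodic f r s] at h1
  · intro s hs
    have h1 := hr (s + 2 * π) ⟨by linarith [hs.1], by linarith [hs.2]⟩
    rwa [curve_periodic f r s] at h1

set_option maxHeartbeats 2000000 in
theorem large_radius_crossings (f : Polynomial ℂ) (N : ℕ) (hN : 1 ≤ N)
    (hdeg : f.natDegree = N) :
    ∃ R : ℝ, 0 < R ∧ ∀ r : ℝ, R < r →
      (∃ t : Fin N → ℝ, StrictMono t ∧ ∀ j : Fin N, t j ∈ Set.Ico (0 : ℝ) (2 * π) ∧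
        IsUpcrossing f r (t j) ∧
        0 < (f.eval ((r : ℂ) * Complex.exp (Complex.I * t j))).re) ∧
      (∃ t' : Fin N → ℝ, StrictMono t' ∧ ∀ j : Fin N, t' j ∈ Set.Ico (0 : ℝ) (2 * π) ∧
        IsDowncrossing f r (t' j) ∧
        (f.eval ((r : ℂ) * Complex.exp (Complex.I * t' j))).re < 0) := by
  have hπ := Real.pi_pos
  have hNpos : (0 : ℝ) < N := by exact_mod_cast hN
  have hNne : (N : ℝ) ≠ 0 := ne_of_gt hNpos
  have hN1 : (1 : ℝ) ≤ N := by exact_mod_cast hN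
  have hf0 : f ≠ 0 := by
    intro h
    rw [h, Polynomial.natDegree_zero] at hdeg
    omega
  have hcne : f.leadingCoeff ≠ 0 := Polynomial.leadingCoeff_ne_zero.mpr hf0
  set c := f.leadingCoeff with hc
  set φ := Complex.arg c with hφ
  have hφ1 : -π < φ := Complex.neg_pi_lt_arg c
  have hφ2 : φ ≤ π := Complex.arg_le_pi c
  have hcpos : 0 < ‖c‖ := norm_pos_iff.mpr hcne
  clear_value c φ
  set C : ℝ := ∑ k ∈ Finset.range N, ‖f.eraseLead.coeff k‖ with hCdef
  have hC0 : 0 ≤ C := Finset.sum_nonneg fun k _ => norm_nonneg _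
  clear_value C
  refine ⟨max 1 (2 * C / ‖c‖), lt_of_lt_of_le one_pos (le_max_left _ _), ?_⟩
  intro r hr
  have hr1 : 1 < r := lt_of_le_of_lt (le_max_left _ _) hr
  have hr0 : 0 < r := by linarith
  have hrC : 2 * C / ‖c‖ < r := lt_of_le_of_lt (le_max_right _ _) hr
  set A : ℝ := ‖c‖ * r ^ N with hA
  have hApos : 0 < A := by rw [hA]; positivity
  clear_value A
  -- error bound
  have herr : ∀ t : ℝ, ‖f.eraseLead.eval ((r : ℂ) * Complex.exp (Complex.I * t))‖ < A / 2 := by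
    intro t
    have hznorm : ‖(r : ℂ) * Complex.exp (Complex.I * t)‖ = r := by
      rw [norm_mul, mul_comm Complex.I (t : ℂ),
        Complex.norm_exp_ofReal_mul_I, mul_one, Complex.norm_of_nonneg hr0.le]
    have hdeg' : f.eraseLead.natDegree ≤ N - 1 := by
      have := Polynomial.eraseLead_natDegree_le f
      omega
    have hb := eval_norm_le f.eraseLead (N - 1) hdeg' _ (by rw [hznorm]; linarith)
    rw [hznorm] at hb
    have hrange : N - 1 + 1 = N := Nat.succ_pred_eq_of_pos hN
    rw [hrange] at hb
    have h1 : 2 * C < r * ‖c‖ := (div_lt_iff₀ hcpos).mp hrC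
    have h2 : (0 : ℝ) < r ^ (N - 1) := by positivity
    have h3 : A = ‖c‖ * (r ^ (N - 1) * r) := by
      rw [hA, ← pow_succ, hrange]
    nlinarith [mul_lt_mul_of_pos_right h1 h2]
  -- decomposition
  have hdecomp : ∀ t : ℝ, f.eval ((r : ℂ) * Complex.exp (Complex.I * t)) =
      f.eraseLead.eval ((r : ℂ) * Complex.exp (Complex.I * t)) +
        ((A : ℂ)) * Complex.exp ((((N : ℝ) * t + φ : ℝ) : ℂ) * Complex.I) := by
    intro t
    conv_lhs => rw [← Polynomial.eraseLead_add_C_mul_X_pow f]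
    rw [Polynomial.eval_add, Polynomial.eval_mul, Polynomial.eval_pow, Polynomial.eval_C,
      Polynomial.eval_X, hdeg, ← hc, leading_term_eq c r t N, ← hφ, ← hA]
  have him : ∀ t : ℝ, (f.eval ((r : ℂ) * Complex.exp (Complex.I * t))).im =
      A * Real.sin ((N : ℝ) * t + φ) +
        (f.eraseLead.eval ((r : ℂ) * Complex.exp (Complex.I * t))).im := by
    intro t
    rw [hdecomp t, Complex.add_im, polar_im]
    ring
  have hre : ∀ t : ℝ, (f.eval ((r : ℂ) * Complex.exp (Complex.I * t))).re =
      A * Real.cos ((N : ℝ) * t + φ) +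
        (f.eraseLead.eval ((r : ℂ) * Complex.exp (Complex.I * t))).re := by
    intro t
    rw [hdecomp t, Complex.add_re, polar_re]
    ring
  have herrIm : ∀ t : ℝ,
      |(f.eraseLead.eval ((r : ℂ) * Complex.exp (Complex.I * t))).im| < A / 2 := fun t =>
    lt_of_le_of_lt (Complex.abs_im_le_norm _) (by exact herr t)
  have herrRe : ∀ t : ℝ,
      |(f.eraseLead.eval ((r : ℂ) * Complex.exp (Complex.I * t))).re| < A / 2 := fun t =>
    lt_of_le_of_lt (Complex.abs_re_le_norm _) (by exact herr t)
  set η : ℝ := π / (6 * N) with hη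
  have hηpos : 0 < η := by rw [hη]; positivity
  clear_value η
  constructor
  -- upcrossings
  · have hup : ∀ j : Fin N, ∃ t : ℝ,
        |t - ((2 * π - φ) / N + 2 * π / N * j)| ≤ π / (6 * N) ∧
        (IsUpcrossing f r t ∧
          0 < (f.eval ((r : ℂ) * Complex.exp (Complex.I * t))).re) := by
      intro j
      set ctr : ℝ := (2 * π - φ) / N + 2 * π / N * j with hctr
      set a : ℝ := ctr - η with ha
      set b : ℝ := ctr + η with hb
      clear_value ctr a b
      have hNa : (N : ℝ) * a + φ = 2 * π * ((j : ℝ) + 1) - π / 6 := by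
        rw [ha, hctr, hη]; field_simp; ring
      have hNb : (N : ℝ) * b + φ = 2 * π * ((j : ℝ) + 1) + π / 6 := by
        rw [hb, hctr, hη]; field_simp; ring
      have hab : a < b := by rw [ha, hb]; linarith
      have hang : ∀ θ ∈ Set.Icc a b,
          |(N : ℝ) * θ + φ - ((j : ℕ) + 1 : ℕ) * (2 * π)| ≤ π / 6 := by
        intro θ hθ
        have h1 : (N : ℝ) * a ≤ N * θ := mul_le_mul_of_nonneg_left hθ.1 (le_of_lt hNpos)
        have h2 : (N : ℝ) * θ ≤ N * b := mul_le_mul_of_nonneg_left hθ.2 (le_of_lt hNpos)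
        rw [abs_le]
        push_cast
        have e1 : ((j : ℝ) + 1) * (2 * π) = 2 * π * ((j : ℝ) + 1) := by ring
        constructor <;> linarith
      have hsina : Real.sin (2 * π * ((j : ℝ) + 1) - π / 6) = -(1 / 2) := by
        have h := sin_shift (-(π / 6)) ((j : ℕ) + 1)
        push_cast at h
        rw [show 2 * π * ((j : ℝ) + 1) - π / 6 = -(π / 6) + ((j : ℝ) + 1) * (2 * π) by ring,
          h, Real.sin_neg, Real.sin_pi_div_six]
      have hsinb : Real.sin (2 * π * ((j : ℝ) + 1) + π / 6) = 1 / 2 := by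
        have h := sin_shift (π / 6) ((j : ℕ) + 1)
        push_cast at h
        rw [show 2 * π * ((j : ℝ) + 1) + π / 6 = π / 6 + ((j : ℝ) + 1) * (2 * π) by ring,
          h, Real.sin_pi_div_six]
      have hga : (f.eval ((r : ℂ) * Complex.exp (Complex.I * a))).im < 0 := by
        rw [him a, hNa, hsina]
        have := (abs_lt.mp (herrIm a)).2
        linarith
      have hgb : 0 < (f.eval ((r : ℂ) * Complex.exp (Complex.I * b))).im := by
        rw [him b, hNb, hsinb]
        have := (abs_lt.mp (herrIm b)).1
        linarith
      have hrepos : ∀ θ ∈ Set.Icc a b,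
          0 < (f.eval ((r : ℂ) * Complex.exp (Complex.I * θ))).re := by
        intro θ hθ
        rw [hre θ]
        have hcos := cos_half_bound ((N : ℝ) * θ + φ) ((j : ℕ) + 1) (hang θ hθ)
        have h1 := (abs_lt.mp (herrRe θ)).1
        nlinarith
      obtain ⟨t, htmem, ht0, δ, hδ, hleft, hright⟩ := crossing_lemma
        (fun θ => (f.eval ((r : ℂ) * Complex.exp (Complex.I * θ))).im)
        (curve_analytic f r) a b hab hga hgb
      have hmem1 : a < t := htmem.1
      have hmem2 : t < b := htmem.2
      rw [ha] at hmem1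
      rw [hb] at hmem2
      refine ⟨t, by rw [abs_le, ← hη]; exact ⟨by linarith, by linarith⟩,
        ⟨ht0, δ, hδ, hleft, hright⟩, hrepos t ⟨le_of_lt htmem.1, le_of_lt htmem.2⟩⟩
    choose su hsu1 hsu2 using hup
    have hθ1 : π / (6 * N) < (2 * π - φ) / N := by
      rw [div_lt_div_iff₀ (by positivity) hNpos]
      nlinarith [mul_pos hπ hNpos]
    have hθ2 : (2 * π - φ) / N + 2 * π / N * ((N : ℝ) - 1) + π / (6 * N) < 4 * π := by
      have hform : (2 * π - φ) / N + 2 * π / N * ((N : ℝ) - 1) + π / (6 * N) =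
          2 * π + (π / 6 - φ) / N := by field_simp; ring
      rw [hform]
      have h2 : (π / 6 - φ) / N < 2 * π := by
        rw [div_lt_iff₀ hNpos]
        nlinarith [mul_pos hπ hNpos]
      linarith
    exact build_family hN
      (fun t => IsUpcrossing f r t ∧ 0 < (f.eval ((r : ℂ) * Complex.exp (Complex.I * t))).re)
      (fun t _ h => ⟨h.1.sub_two_pi, by rw [curve_sub f r t]; exact h.2⟩)
      ((2 * π - φ) / N) su hsu2 hsu1 hθ1 hθ2
  -- downcrossings
  · set x : ℝ := if φ ≤ π / 2 then π - φ else 3 * π - φ with hx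
    set kd : ℕ := if φ ≤ π / 2 then 0 else 1 with hkd
    clear_value x kd
    have hxk : x + φ = π + 2 * π * kd := by
      rw [hx, hkd]
      by_cases h : φ ≤ π / 2 <;> simp [h] <;> push_cast <;> ring
    have hxlow : π / 2 ≤ x := by
      rw [hx]
      by_cases h : φ ≤ π / 2 <;> simp [h] <;> linarith
    have hxhigh : x ≤ 5 * π / 2 := by
      rw [hx]
      by_cases h : φ ≤ π / 2 <;> simp [h]
      · linarith
      · push_neg at h; linarith
    have hdn : ∀ j : Fin N, ∃ t : ℝ,
        |t - (x / N + 2 * π / N * j)| ≤ π / (6 * N) ∧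
        (IsDowncrossing f r t ∧
          (f.eval ((r : ℂ) * Complex.exp (Complex.I * t))).re < 0) := by
      intro j
      set ctr : ℝ := x / N + 2 * π / N * j with hctr
      set a : ℝ := ctr - η with ha
      set b : ℝ := ctr + η with hb
      clear_value ctr a b
      have hNa : (N : ℝ) * a + φ = π - π / 6 + ((j : ℕ) + kd : ℕ) * (2 * π) := by
        have h1 : (N : ℝ) * a = x + 2 * π * (j : ℝ) - π / 6 := by
          rw [ha, hctr, hη]; field_simp
        push_cast
        linarith [hxk, h1]
      have hNb : (N : ℝ) * b + φ = π + π / 6 + ((j : ℕ) + kd : ℕ) * (2 * π) := by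
        have h1 : (N : ℝ) * b = x + 2 * π * (j : ℝ) + π / 6 := by
          rw [hb, hctr, hη]; field_simp
        push_cast
        linarith [hxk, h1]
      have hab : a < b := by rw [ha, hb]; linarith
      have hang : ∀ θ ∈ Set.Icc a b,
          |(N : ℝ) * θ + φ - (π + ((j : ℕ) + kd : ℕ) * (2 * π))| ≤ π / 6 := by
        intro θ hθ
        have h1 : (N : ℝ) * a ≤ N * θ := mul_le_mul_of_nonneg_left hθ.1 (le_of_lt hNpos)
        have h2 : (N : ℝ) * θ ≤ N * b := mul_le_mul_of_nonneg_left hθ.2 (le_of_lt hNpos)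
        rw [abs_le]
        constructor <;> linarith
      have hsina : Real.sin (π - π / 6 + ((j : ℕ) + kd : ℕ) * (2 * π)) = 1 / 2 := by
        rw [sin_shift (π - π / 6) ((j : ℕ) + kd), Real.sin_pi_sub, Real.sin_pi_div_six]
      have hsinb : Real.sin (π + π / 6 + ((j : ℕ) + kd : ℕ) * (2 * π)) = -(1 / 2) := by
        rw [show π + π / 6 = π / 6 + π by ring, sin_shift (π / 6 + π) ((j : ℕ) + kd),
          Real.sin_add_pi, Real.sin_pi_div_six]
      have hga : 0 < (f.eval ((r : ℂ) * Complex.exp (Complex.I * a))).im := by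
        rw [him a, hNa, hsina]
        have := (abs_lt.mp (herrIm a)).1
        linarith
      have hgb : (f.eval ((r : ℂ) * Complex.exp (Complex.I * b))).im < 0 := by
        rw [him b, hNb, hsinb]
        have := (abs_lt.mp (herrIm b)).2
        linarith
      have hreneg : ∀ θ ∈ Set.Icc a b,
          (f.eval ((r : ℂ) * Complex.exp (Complex.I * θ))).re < 0 := by
        intro θ hθ
        rw [hre θ]
        have hcos := cos_neg_half_bound ((N : ℝ) * θ + φ) ((j : ℕ) + kd) (hang θ hθ)
        have h1 := (abs_lt.mp (herrRe θ)).2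
        nlinarith
      obtain ⟨t, htmem, ht0, δ, hδ, hleft, hright⟩ := crossing_lemma
        (fun θ => -(f.eval ((r : ℂ) * Complex.exp (Complex.I * θ))).im)
        (fun y => (curve_analytic f r y).neg) a b hab (by simpa using hga) (by simpa using hgb)
      have hmem1 : a < t := htmem.1
      have hmem2 : t < b := htmem.2
      rw [ha] at hmem1
      rw [hb] at hmem2
      refine ⟨t, by rw [abs_le, ← hη]; exact ⟨by linarith, by linarith⟩,
        ⟨by simpa using ht0, δ, hδ, ?_, ?_⟩,
        hreneg t ⟨le_of_lt htmem.1, le_of_lt htmem.2⟩⟩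
      · intro s hs
        have := hleft s hs
        simp only [neg_nonpos] at this
        exact this
      · intro s hs
        have := hright s hs
        simp only [ge_iff_le, le_neg, neg_zero] at this
        linarith
    choose sd hsd1 hsd2 using hdn
    have hθ1 : π / (6 * N) < x / N := by
      rw [div_lt_div_iff₀ (by positivity) hNpos]
      nlinarith [mul_pos hπ hNpos]
    have hθ2 : x / N + 2 * π / N * ((N : ℝ) - 1) + π / (6 * N) < 4 * π := by
      have hform : x / N + 2 * π / N * ((N : ℝ) - 1) + π / (6 * N) =
          2 * π + (x + π / 6 - 2 * π) / N := by field_simp; ring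
      rw [hform]
      have h2 : (x + π / 6 - 2 * π) / N < 2 * π := by
        rw [div_lt_iff₀ hNpos]
        nlinarith [mul_pos hπ hNpos]
      linarith
    exact build_family hN
      (fun t => IsDowncrossing f r t ∧ (f.eval ((r : ℂ) * Complex.exp (Complex.I * t))).re < 0)
      (fun t _ h => ⟨h.1.sub_two_pi, by rw [curve_sub f r t]; exact h.2⟩)
      (x / N) sd hsd2 hsd1 hθ1 hθ2
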